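/- Let $\alpha,\beta\in W^{1,p}(I)$ be a lower and an upper solution of $(\Phi(a(t,x)x'))'=f(t,x,x')$ with $\alpha\le\beta$ on $I$, and suppose $a(T,x)\neq 0$ for all $x\in\mathbb{R}$. If $\alpha(T)=\beta(T)$, then $\mathcal{A}_\alpha(T)\ge\mathcal{A}_\beta(T)$. -/

import Mathlib

open MeasureTheory Set Filter Topology

noncomputable section

/-- `x ∈ W^{1,p}([0,T])` with (weak) derivative `x'`. -/
def MemW1p (T p : ℝ) (x x' : ℝ → ℝ) : Prop :=
  MemLp x (ENNReal.ofReal p) (volume.restrict (Icc (0:ℝ) T)) ∧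
  MemLp x' (ENNReal.ofReal p) (volume.restrict (Icc (0:ℝ) T)) ∧
  ∀ t ∈ Icc (0:ℝ) T, x t = x 0 + ∫ s in (0:ℝ)..t, x' s

/-- The `W^{1,p}` norm of a function `x` with derivative `x'`. -/
def W1pNorm (T p : ℝ) (x x' : ℝ → ℝ) : ℝ :=
  (eLpNorm x (ENNReal.ofReal p) (volume.restrict (Icc (0:ℝ) T))).toReal +
  (eLpNorm x' (ENNReal.ofReal p) (volume.restrict (Icc (0:ℝ) T))).toReal

/-- `x` (with derivative `x'`) is a solution of `(Φ(a(t,x)x'))' = f(t,x,x')` a.e. on `[0,T]`,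
with `x ∈ W^{1,p}` and `t ↦ Φ(a(t,x(t))x'(t))` in `W^{1,1}`. -/
def IsSolODE (T p : ℝ) (Φ : ℝ → ℝ) (a : ℝ → ℝ → ℝ) (f : ℝ → ℝ → ℝ → ℝ)
    (x x' : ℝ → ℝ) : Prop :=
  MemW1p T p x x' ∧
  IntegrableOn (fun s => f s (x s) (x' s)) (Icc 0 T) ∧
  ∃ c : ℝ, ∀ᵐ t ∂(volume.restrict (Icc (0:ℝ) T)),
    Φ (a t (x t) * x' t) = c + ∫ s in (0:ℝ)..t, f s (x s) (x' s)

/-- `α` (with derivative `α'`) is a lower solution of `(Φ(a(t,x)x'))' = f(t,x,x')`: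
`α ∈ W^{1,1}`, `t ↦ Φ(a(t,α)α')` is in `W^{1,1}` and its derivative is `≥ f(t,α,α')` a.e. -/
def IsLowerSol (T : ℝ) (Φ : ℝ → ℝ) (a : ℝ → ℝ → ℝ) (f : ℝ → ℝ → ℝ → ℝ)
    (α α' : ℝ → ℝ) : Prop :=
  IntegrableOn α' (Icc 0 T) ∧
  (∀ t ∈ Icc (0:ℝ) T, α t = α 0 + ∫ s in (0:ℝ)..t, α' s) ∧
  ∃ z : ℝ → ℝ, IntegrableOn z (Icc 0 T) ∧
    (∃ c : ℝ, ∀ᵐ t ∂(volume.restrict (Icc (0:ℝ) T)),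
      Φ (a t (α t) * α' t) = c + ∫ s in (0:ℝ)..t, z s) ∧
    (∀ᵐ t ∂(volume.restrict (Icc (0:ℝ) T)), f t (α t) (α' t) ≤ z t)

/-- `β` (with derivative `β'`) is an upper solution of `(Φ(a(t,x)x'))' = f(t,x,x')`. -/
def IsUpperSol (T : ℝ) (Φ : ℝ → ℝ) (a : ℝ → ℝ → ℝ) (f : ℝ → ℝ → ℝ → ℝ)
    (β β' : ℝ → ℝ) : Prop :=
  IntegrableOn β' (Icc 0 T) ∧
  (∀ t ∈ Icc (0:ℝ) T, β t = β 0 + ∫ s in (0:ℝ)..t, β' s) ∧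
  ∃ z : ℝ → ℝ, IntegrableOn z (Icc 0 T) ∧
    (∃ c : ℝ, ∀ᵐ t ∂(volume.restrict (Icc (0:ℝ) T)),
      Φ (a t (β t) * β' t) = c + ∫ s in (0:ℝ)..t, z s) ∧
    (∀ᵐ t ∂(volume.restrict (Icc (0:ℝ) T)), z t ≤ f t (β t) (β' t))

/-- If the lower and upper solutions `α ≤ β` agree at `T` and `a(T,·) ≠ 0`, then `𝒜_α(T) ≥ 𝒜_β(T)`. -/
theorem stmt9
    (T p : ℝ) (hT : 0 < T) (hp : 1 < p)
    (Φ : ℝ ≃ₜ ℝ) (hΦ : StrictMono ⇑Φ)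
    (a : ℝ → ℝ → ℝ) (ha : Continuous fun q : ℝ × ℝ => a q.1 q.2)
    (h : ℝ → ℝ) (hhc : ContinuousOn h (Icc 0 T)) (hhnn : ∀ t ∈ Icc (0:ℝ) T, 0 ≤ h t)
    (hhp : MemLp (fun t => (h t)⁻¹) (ENNReal.ofReal p) (volume.restrict (Icc (0:ℝ) T)))
    (hah : ∀ t ∈ Icc (0:ℝ) T, ∀ s : ℝ, h t ≤ a t s)
    (f : ℝ → ℝ → ℝ → ℝ)
    (hfmeas : ∀ u v : ℝ, Measurable fun t => f t u v)
    (hfcont : ∀ᵐ t ∂(volume.restrict (Icc (0:ℝ) T)), Continuous fun q : ℝ × ℝ => f t q.1 q.2)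
    (α α' β β' : ℝ → ℝ)
    (hαW : MemW1p T p α α') (hβW : MemW1p T p β β')
    (hlow : IsLowerSol T (⇑Φ) a f α α') (hupp : IsUpperSol T (⇑Φ) a f β β')
    (hαβ : ∀ t ∈ Icc (0:ℝ) T, α t ≤ β t)
    (haT : ∀ s : ℝ, a T s ≠ 0)
    (Aα Aβ : ℝ → ℝ)
    (hAαc : ContinuousOn Aα (Icc 0 T)) (hAβc : ContinuousOn Aβ (Icc 0 T))
    (hAαeq : ∀ᵐ t ∂(volume.restrict (Icc (0:ℝ) T)), Aα t = a t (α t) * α' t)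
    (hAβeq : ∀ᵐ t ∂(volume.restrict (Icc (0:ℝ) T)), Aβ t = a t (β t) * β' t)
    (hT0 : α T = β T) :
    Aβ T ≤ Aα T := by
  by_contra hcon
  push_neg at hcon
  set ε := Aβ T - Aα T with hεdef
  have hε0 : 0 < ε := by simp [hεdef]; linarith
  have hTmem : T ∈ Icc (0:ℝ) T := ⟨hT.le, le_rfl⟩
  obtain ⟨hαint, hαeq, -⟩ := hlow
  obtain ⟨hβint, hβeq, -⟩ := hupp
  -- continuity of α and β on [0,T]
  have hαcont : ContinuousOn α (Icc 0 T) := by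
    have h1 : ContinuousOn (fun t => α 0 + ∫ s in Icc (0:ℝ) t, α' s) (Icc 0 T) :=
      continuousOn_const.add (intervalIntegral.continuousOn_primitive_Icc hαint)
    refine ContinuousOn.congr h1 ?_
    intro t ht
    rw [hαeq t ht, intervalIntegral.integral_of_le ht.1]
    simp [MeasureTheory.integral_Icc_eq_integral_Ioc]
  have hβcont : ContinuousOn β (Icc 0 T) := by
    have h1 : ContinuousOn (fun t => β 0 + ∫ s in Icc (0:ℝ) t, β' s) (Icc 0 T) :=
      continuousOn_const.add (intervalIntegral.continuousOn_primitive_Icc hβint)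
    refine ContinuousOn.congr h1 ?_
    intro t ht
    rw [hβeq t ht, intervalIntegral.integral_of_le ht.1]
    simp [MeasureTheory.integral_Icc_eq_integral_Ioc]
  have hcα : ContinuousOn (fun t => a t (α t)) (Icc 0 T) :=
    ha.comp_continuousOn (continuousOn_id.prodMk hαcont)
  have hcβ : ContinuousOn (fun t => a t (β t)) (Icc 0 T) :=
    ha.comp_continuousOn (continuousOn_id.prodMk hβcont)
  set A := a T (α T) with hAdef
  have hA0 : 0 < A :=
    lt_of_le_of_ne (le_trans (hhnn T hTmem) (hah T hTmem (α T))) (Ne.symm (haT (α T)))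
  have hAβT : a T (β T) = A := by rw [hAdef, hT0]
  set δ := ε / (4 * A) with hδdef
  have hδ0 : 0 < δ := div_pos hε0 (by linarith)
  -- the good set near T
  have hGcont : ContinuousWithinAt
      (fun t => (Aβ T - ε/4) / a t (β t) - (Aα T + ε/4) / a t (α t)) (Icc 0 T) T := by
    apply ContinuousWithinAt.sub
    · exact (continuousWithinAt_const).div (hcβ T hTmem) (by rw [hAβT]; exact hA0.ne')
    · exact (continuousWithinAt_const).div (hcα T hTmem) hA0.ne'
  have hGval : δ < (Aβ T - ε/4) / a T (β T) - (Aα T + ε/4) / a T (α T) := by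
    rw [hAβT, ← hAdef, div_sub_div_same]
    have h2 : Aβ T - ε/4 - (Aα T + ε/4) = ε/2 := by rw [hεdef]; ring
    rw [h2, hδdef, div_lt_div_iff₀ (by linarith) hA0]
    nlinarith
  have hEv : ∀ᶠ t in 𝓝[Icc (0:ℝ) T] T,
      (δ < (Aβ T - ε/4) / a t (β t) - (Aα T + ε/4) / a t (α t)) ∧
      0 < a t (α t) ∧ 0 < a t (β t) ∧
      Aβ T - ε/4 < Aβ t ∧ Aα t < Aα T + ε/4 := by
    have e1 := hGcont.eventually_const_lt hGval
    have e2 : ∀ᶠ t in 𝓝[Icc (0:ℝ) T] T, 0 < a t (α t) :=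
      (hcα T hTmem).eventually_const_lt hA0
    have e3 : ∀ᶠ t in 𝓝[Icc (0:ℝ) T] T, 0 < a t (β t) :=
      (hcβ T hTmem).eventually_const_lt (lt_of_lt_of_eq hA0 hAβT.symm)
    have e4 : ∀ᶠ t in 𝓝[Icc (0:ℝ) T] T, Aβ T - ε/4 < Aβ t :=
      (hAβc T hTmem).eventually_const_lt (by linarith)
    have e5 : ∀ᶠ t in 𝓝[Icc (0:ℝ) T] T, Aα t < Aα T + ε/4 :=
      (hAαc T hTmem).eventually_lt_const (by linarith)
    filter_upwards [e1, e2, e3, e4, e5] with t h1 h2 h3 h4 h5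
    exact ⟨h1, h2, h3, h4, h5⟩
  rw [eventually_iff, Metric.mem_nhdsWithin_iff] at hEv
  obtain ⟨r, hr0, hball⟩ := hEv
  set t0 := max (T - r/2) 0 with ht0def
  have ht0T : t0 < T := by
    apply max_lt <;> linarith
  have ht0mem : t0 ∈ Icc (0:ℝ) T := ⟨le_max_right _ _, ht0T.le⟩
  have hsub : Icc t0 T ⊆ Icc (0:ℝ) T := Icc_subset_Icc ht0mem.1 le_rfl
  have hgood : ∀ t ∈ Icc t0 T,
      (δ < (Aβ T - ε/4) / a t (β t) - (Aα T + ε/4) / a t (α t)) ∧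
      0 < a t (α t) ∧ 0 < a t (β t) ∧
      Aβ T - ε/4 < Aβ t ∧ Aα t < Aα T + ε/4 := by
    intro t ht
    apply hball
    constructor
    · rw [Metric.mem_ball, Real.dist_eq, abs_of_nonpos (by linarith [ht.2])]
      have : T - r/2 ≤ t0 := le_max_left _ _
      have := ht.1
      linarith
    · exact hsub ht
  -- a.e. inequality on [t0, T]
  have hkey : ∀ᵐ t ∂(volume.restrict (Icc t0 T)), δ ≤ β' t - α' t := by
    have hAα' := ae_restrict_of_ae_restrict_of_subset hsub hAαeq
    have hAβ' := ae_restrict_of_ae_restrict_of_subset hsub hAβeq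
    have hmem : ∀ᵐ t ∂(volume.restrict (Icc t0 T)), t ∈ Icc t0 T :=
      ae_restrict_mem measurableSet_Icc
    filter_upwards [hAα', hAβ', hmem] with t h1 h2 hmemt
    obtain ⟨hg1, hg2, hg3, hg4, hg5⟩ := hgood t hmemt
    have hβ'ge : (Aβ T - ε/4) / a t (β t) ≤ β' t := by
      rw [div_le_iff₀ hg3]
      nlinarith
    have hα'le : α' t ≤ (Aα T + ε/4) / a t (α t) := by
      rw [le_div_iff₀ hg2]
      nlinarith
    linarith
  -- integrability
  have hβ'ii : IntervalIntegrable β' volume t0 T := by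
    rw [intervalIntegrable_iff_integrableOn_Icc_of_le ht0T.le]
    exact hβint.mono_set hsub
  have hα'ii : IntervalIntegrable α' volume t0 T := by
    rw [intervalIntegrable_iff_integrableOn_Icc_of_le ht0T.le]
    exact hαint.mono_set hsub
  have hβ'ii0 : IntervalIntegrable β' volume 0 t0 := by
    rw [intervalIntegrable_iff_integrableOn_Icc_of_le ht0mem.1]
    exact hβint.mono_set (Icc_subset_Icc le_rfl ht0mem.2)
  have hα'ii0 : IntervalIntegrable α' volume 0 t0 := by
    rw [intervalIntegrable_iff_integrableOn_Icc_of_le ht0mem.1]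
    exact hαint.mono_set (Icc_subset_Icc le_rfl ht0mem.2)
  -- the integral bound
  have hint : δ * (T - t0) ≤ ∫ t in t0..T, (β' t - α' t) := by
    have h1 : ∫ t in t0..T, (δ:ℝ) = δ * (T - t0) := by
      rw [intervalIntegral.integral_const]; ring_nf
    rw [← h1]
    exact intervalIntegral.integral_mono_ae_restrict ht0T.le
      intervalIntegrable_const (hβ'ii.sub hα'ii) hkey
  have hsplit : ∫ t in t0..T, (β' t - α' t) = (β T - β t0) - (α T - α t0) := by
    rw [intervalIntegral.integral_sub hβ'ii hα'ii]
    have hβs : ∫ t in t0..T, β' t = β T - β t0 := by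
      have := intervalIntegral.integral_add_adjacent_intervals hβ'ii0 hβ'ii
      rw [hβeq T hTmem, hβeq t0 ht0mem]
      linarith
    have hαs : ∫ t in t0..T, α' t = α T - α t0 := by
      have := intervalIntegral.integral_add_adjacent_intervals hα'ii0 hα'ii
      rw [hαeq T hTmem, hαeq t0 ht0mem]
      linarith
    rw [hβs, hαs]
  have hle0 : (β T - β t0) - (α T - α t0) ≤ 0 := by
    have := hαβ t0 ht0mem
    rw [hT0]; linarith
  have hpos : 0 < δ * (T - t0) := mul_pos hδ0 (by linarith)
  rw [hsplit] at hint
  linarith
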